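/- Let R be a bounded operator on ℂⁿ ⊗ H (H a complex Hilbert space) with n × n operator block entries R_{ij} ∈ L(H), and suppose R + R* ≥ s·I for some s > 0. Suppose Λ ∈ ℂ^{n×n} is such that there exists a sequence of unit vectors h_ν ∈ H with (R_{ij} − Λ_{ij}·I_H)h_ν → 0 for all i, j (i.e., Λ is in the approximate point spectrum of the commuting tuple (R_{ij})). Then Λ + Λ* ≥ s·I_n as matrices. -/

import Mathlib

open scoped Matrix ComplexOrder

/-- The operator on `ℂⁿ ⊗ H` determined by an `n × n` block matrix
`(R_{ij})` of bounded operators on `H`. -/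
noncomputable def blockMatOp {n : ℕ} {H : Type*}
    [NormedAddCommGroup H] [InnerProductSpace ℂ H]
    (R : Fin n → Fin n → (H →L[ℂ] H)) :
    PiLp 2 (fun _ : Fin n => H) →L[ℂ] PiLp 2 (fun _ : Fin n => H) :=
  (((PiLp.continuousLinearEquiv 2 ℂ (fun _ : Fin n => H)).symm :
      (∀ _ : Fin n, H) →L[ℂ] PiLp 2 (fun _ : Fin n => H)).comp
    (ContinuousLinearMap.pi fun i => ∑ j, (R i j).comp (ContinuousLinearMap.proj j))).comp
    ((PiLp.continuousLinearEquiv 2 ℂ (fun _ : Fin n => H)) :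
      PiLp 2 (fun _ : Fin n => H) →L[ℂ] (∀ _ : Fin n, H))

lemma blockMatOp_apply {n : ℕ} {H : Type*}
    [NormedAddCommGroup H] [InnerProductSpace ℂ H]
    (R : Fin n → Fin n → (H →L[ℂ] H)) (v : Fin n → H) (i : Fin n) :
    (blockMatOp R ((WithLp.equiv 2 _).symm v)) i = ∑ j, R i j (v j) := by
  simp [blockMatOp, ContinuousLinearMap.sum_apply]

lemma inner_tendsto_conj {H : Type*}
    [NormedAddCommGroup H] [InnerProductSpace ℂ H]
    (T : H →L[ℂ] H) (lam : ℂ) (h : ℕ → H) (hnorm : ∀ ν, ‖h ν‖ = 1)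
    (hconv : Filter.Tendsto (fun ν => T (h ν) - lam • h ν) Filter.atTop (nhds 0)) :
    Filter.Tendsto (fun ν => (inner ℂ (T (h ν)) (h ν) : ℂ)) Filter.atTop
      (nhds ((starRingEnd ℂ) lam)) := by
  have h0 : Filter.Tendsto (fun ν => (inner ℂ (T (h ν) - lam • h ν) (h ν) : ℂ))
      Filter.atTop (nhds 0) := by
    apply squeeze_zero_norm (a := fun ν => ‖T (h ν) - lam • h ν‖)
    · intro ν
      calc ‖(inner ℂ (T (h ν) - lam • h ν) (h ν) : ℂ)‖
          ≤ ‖T (h ν) - lam • h ν‖ * ‖h ν‖ := norm_inner_le_norm _ _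
        _ = ‖T (h ν) - lam • h ν‖ := by rw [hnorm]; ring
    · simpa using hconv.norm
  have heq : ∀ ν, (inner ℂ (T (h ν)) (h ν) : ℂ)
      = inner ℂ (T (h ν) - lam • h ν) (h ν) + (starRingEnd ℂ) lam := by
    intro ν
    rw [inner_sub_left, inner_smul_left, inner_self_eq_norm_sq_to_K, hnorm]
    push_cast; ring
  have h1 := h0.add (tendsto_const_nhds (x := (starRingEnd ℂ) lam))
  rw [zero_add] at h1
  exact h1.congr (fun ν => (heq ν).symm)

/-- If the block operator `R = (R_{ij})` on `ℂⁿ ⊗ H` satisfies `R + R* ≥ s·I`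
(`s > 0`), and `Λ ∈ ℂ^{n×n}` lies in the approximate point spectrum of the tuple
`(R_{ij})` — witnessed by unit vectors `h_ν` with `(R_{ij} − Λ_{ij})h_ν → 0` —
then `Λ + Λ* ≥ s·I_n`. -/
theorem approx_spectrum_accretive {n : ℕ} {H : Type*}
    [NormedAddCommGroup H] [InnerProductSpace ℂ H]
    (R : Fin n → Fin n → (H →L[ℂ] H)) (s : ℝ) (hs : 0 < s)
    (hR : ∀ x : PiLp 2 (fun _ : Fin n => H),
      s * ‖x‖ ^ 2 ≤ 2 * ((inner ℂ ((blockMatOp R) x) x : ℂ)).re)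
    (Λ : Matrix (Fin n) (Fin n) ℂ)
    (h : ℕ → H) (hnorm : ∀ ν, ‖h ν‖ = 1)
    (hconv : ∀ i j, Filter.Tendsto (fun ν => R i j (h ν) - Λ i j • h ν)
      Filter.atTop (nhds 0)) :
    ∀ u : EuclideanSpace ℂ (Fin n),
      s * ‖u‖ ^ 2 ≤
        ((inner ℂ ((Matrix.toEuclideanCLM (𝕜 := ℂ) (Λ + Λᴴ)) u) u : ℂ)).re := by
  intro u
  classical
  set x : ℕ → PiLp 2 (fun _ : Fin n => H) :=
    fun ν => (WithLp.equiv 2 _).symm (fun i => u i • h ν) with hxdef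
  -- norm of x ν
  have hnx : ∀ ν, ‖x ν‖ ^ 2 = ‖u‖ ^ 2 := by
    intro ν
    rw [PiLp.norm_sq_eq_of_L2, PiLp.norm_sq_eq_of_L2]
    refine Finset.sum_congr rfl fun i _ => ?_
    have : (x ν) i = u i • h ν := rfl
    rw [this, norm_smul, hnorm]
    simp
  -- inner product formula
  have hB : ∀ ν, (inner ℂ ((blockMatOp R) (x ν)) (x ν) : ℂ) =
      ∑ i, ∑ j, (starRingEnd ℂ) (u j) * (u i * inner ℂ (R i j (h ν)) (h ν)) := by
    intro ν
    rw [PiLp.inner_apply]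
    refine Finset.sum_congr rfl fun i _ => ?_
    have h1 : (blockMatOp R) (x ν) i = ∑ j, R i j (u j • h ν) :=
      blockMatOp_apply R _ i
    have h2 : (x ν) i = u i • h ν := rfl
    rw [h1, h2, sum_inner]
    refine Finset.sum_congr rfl fun j _ => ?_
    rw [map_smul, inner_smul_left, inner_smul_right]
  -- limit of inner products
  set L : ℂ := ∑ i, ∑ j, (starRingEnd ℂ) (u j) *
      (u i * (starRingEnd ℂ) (Λ i j)) with hLdef
  have hlim : Filter.Tendsto (fun ν => (inner ℂ ((blockMatOp R) (x ν)) (x ν) : ℂ))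
      Filter.atTop (nhds L) := by
    simp only [hB, hLdef]
    refine tendsto_finset_sum _ fun i _ => tendsto_finset_sum _ fun j _ => ?_
    exact (((inner_tendsto_conj (R i j) (Λ i j) h hnorm (hconv i j)).const_mul
      (u i)).const_mul ((starRingEnd ℂ) (u j)))
  have hlim2 : Filter.Tendsto (fun ν => 2 * ((inner ℂ ((blockMatOp R) (x ν)) (x ν) : ℂ)).re)
      Filter.atTop (nhds (2 * L.re)) :=
    (Complex.continuous_re.continuousAt.tendsto.comp hlim).const_mul 2
  have hle : s * ‖u‖ ^ 2 ≤ 2 * L.re := by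
    refine le_of_tendsto_of_tendsto tendsto_const_nhds hlim2
      (Filter.Eventually.of_forall fun ν => ?_)
    calc s * ‖u‖ ^ 2 = s * ‖x ν‖ ^ 2 := by rw [hnx]
      _ ≤ 2 * ((inner ℂ ((blockMatOp R) (x ν)) (x ν) : ℂ)).re := hR (x ν)
  refine hle.trans (le_of_eq ?_)
  -- compute the RHS
  have hMu : ∀ i, ((Matrix.toEuclideanCLM (𝕜 := ℂ) (Λ + Λᴴ)) u) i
      = ∑ j, (Λ + Λᴴ) i j * u j := fun i => rfl
  have hRHS : (inner ℂ ((Matrix.toEuclideanCLM (𝕜 := ℂ) (Λ + Λᴴ)) u) u : ℂ)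
      = ∑ i, ∑ j, (starRingEnd ℂ) ((Λ + Λᴴ) i j) * ((starRingEnd ℂ) (u j) * u i) := by
    rw [PiLp.inner_apply]
    refine Finset.sum_congr rfl fun i _ => ?_
    rw [hMu i, RCLike.inner_apply, map_sum, Finset.mul_sum]
    refine Finset.sum_congr rfl fun j _ => ?_
    rw [map_mul]; ring
  rw [hRHS, hLdef]
  rw [Complex.re_sum]
  simp only [Complex.re_sum]
  have hsplit : ∀ i j, ((starRingEnd ℂ) ((Λ + Λᴴ) i j) * ((starRingEnd ℂ) (u j) * u i)).re
      = ((starRingEnd ℂ) (Λ i j) * ((starRingEnd ℂ) (u j) * u i)).re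
        + (Λ j i * ((starRingEnd ℂ) (u j) * u i)).re := by
    intro i j
    have : (Λ + Λᴴ) i j = Λ i j + (starRingEnd ℂ) (Λ j i) := by
      simp [Matrix.add_apply, Matrix.conjTranspose_apply]
    rw [this, map_add, RingHomInvPair.comp_apply_eq, add_mul, Complex.add_re]
  have hswap : ∀ i j, (Λ j i * ((starRingEnd ℂ) (u j) * u i)).re
      = ((starRingEnd ℂ) (Λ j i) * ((starRingEnd ℂ) (u i) * u j)).re := by
    intro i j
    rw [← Complex.conj_re (Λ j i * ((starRingEnd ℂ) (u j) * u i))]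
    congr 1
    rw [map_mul, map_mul, RingHomInvPair.comp_apply_eq]
    ring
  have h2 : (∑ i, ∑ j, (Λ j i * ((starRingEnd ℂ) (u j) * u i)).re)
      = ∑ i, ∑ j, ((starRingEnd ℂ) (Λ i j) * ((starRingEnd ℂ) (u j) * u i)).re := by
    simp only [hswap]
    exact Finset.sum_comm
  have h3 : ∀ i j, ((starRingEnd ℂ) (u j) * (u i * (starRingEnd ℂ) (Λ i j))).re
      = ((starRingEnd ℂ) (Λ i j) * ((starRingEnd ℂ) (u j) * u i)).re := by
    intro i j; congr 1; ring
  simp only [hsplit, Finset.sum_add_distrib, h3]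
  rw [h2]
  ring
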